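/- Let U : [0,T] ⇉ ℝ^m be a set-valued mapping with measurable graph and f : [0,T] × ℝ^m → ℝ ∪ {-∞,+∞} jointly measurable. Suppose ū : [0,T] → ℝ^m is a measurable selection of U such that t ↦ f(t, ū(t)) is integrable and ∫₀^T f(t, ū(t)) dt ≥ ∫₀^T f(t, u(t)) dt for every measurable selection u of U for which the right-hand integral makes sense. Then for almost every t ∈ [0,T], f(t, ū(t)) ≥ f(t, u) for all u ∈ U(t). -/

import Mathlib

open Set MeasureTheory Filter
open scoped ENNReal

namespace IntPtwsAux


/-- Cylinder set in Baire space determined by a finite list. -/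
def cylN (s : List ℕ) : Set (ℕ → ℕ) := {x | ∀ i, ∀ _ : i < s.length, x i = s[i]}

lemma isClosed_cylN (s : List ℕ) : IsClosed (cylN s) := by
  have h : cylN s = ⋂ (i : ℕ) (hi : i < s.length), {x : ℕ → ℕ | x i = s[i]} := by
    ext x; simp [cylN]
  rw [h]
  exact isClosed_iInter fun i => isClosed_iInter fun hi =>
    isClosed_eq (continuous_apply _) continuous_const

lemma cylN_nil : cylN [] = univ := by
  ext x; simp [cylN]

lemma cylN_append_subset (s l : List ℕ) : cylN (s ++ l) ⊆ cylN s := by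
  intro x hx i hi
  have hi' : i < (s ++ l).length := by simp [List.length_append]; omega
  have := hx i hi'
  rwa [List.getElem_append, dif_pos hi] at this

lemma mem_cylN_concat {x : ℕ → ℕ} {s : List ℕ} (hx : x ∈ cylN s) :
    x ∈ cylN (s ++ [x s.length]) := by
  intro i hi
  simp only [List.length_append, List.length_singleton] at hi
  rcases lt_or_eq_of_le (Nat.lt_succ_iff.1 hi) with hlt | heq
  · rw [List.getElem_append, dif_pos hlt]
    exact hx i hlt
  · rw [List.getElem_concat_length heq, heq]

/-- The next digit of the lexicographically least branch. -/
noncomputable def dd (h : (ℕ → ℕ) → ℝ) (L : Set (ℕ → ℕ)) (s : List ℕ) (t : ℝ) : ℕ :=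
  sInf {j | t ∈ h '' (L ∩ cylN (s ++ [j]))}

/-- Prefixes of the lexicographically least branch. -/
noncomputable def pre (h : (ℕ → ℕ) → ℝ) (L : Set (ℕ → ℕ)) : ℕ → ℝ → List ℕ
  | 0, _ => []
  | n+1, t => pre h L n t ++ [dd h L (pre h L n t) t]

lemma pre_length (h L) : ∀ n t, (pre h L n t).length = n := by
  intro n
  induction n with
  | zero => intro t; simp [pre]
  | succ n ih => intro t; simp [pre, ih]

section Sel

variable {h : (ℕ → ℕ) → ℝ} (hh : Continuous h) {L : Set (ℕ → ℕ)} (hL : IsCompact L)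

include hh hL in
lemma measQ (s : List ℕ) : MeasurableSet (h '' (L ∩ cylN s)) :=
  ((hL.inter_right (isClosed_cylN s)).image hh).isClosed.measurableSet

include hh hL in
lemma meas_dd (s : List ℕ) (j : ℕ) : MeasurableSet {t | dd h L s t = j} := by
  by_cases hj : j = 0
  · subst hj
    have key : {t | dd h L s t = 0} =
        (h '' (L ∩ cylN (s ++ [0]))) ∪ ⋂ i : ℕ, (h '' (L ∩ cylN (s ++ [i])))ᶜ := by
      ext t
      simp only [mem_setOf_eq, mem_union, mem_iInter, mem_compl_iff]
      constructor
      · intro ht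
        by_cases hne : {j' | t ∈ h '' (L ∩ cylN (s ++ [j']))}.Nonempty
        · left
          have hmem : t ∈ h '' (L ∩ cylN (s ++ [dd h L s t])) := Nat.sInf_mem hne
          rwa [ht] at hmem
        · right
          exact fun i hti => hne ⟨i, hti⟩
      · rintro (h1 | h2)
        · exact Nat.le_antisymm (Nat.sInf_le h1) (Nat.zero_le _)
        · have : {j' | t ∈ h '' (L ∩ cylN (s ++ [j']))} = ∅ := by
            ext i
            simp only [mem_setOf_eq, mem_empty_iff_false, iff_false]
            exact h2 i
          rw [dd, this, Nat.sInf_empty]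
    rw [key]
    exact (measQ hh hL _).union (MeasurableSet.iInter fun i => (measQ hh hL _).compl)
  · have key : {t | dd h L s t = j} =
        (h '' (L ∩ cylN (s ++ [j]))) ∩ ⋂ i ∈ Finset.range j, (h '' (L ∩ cylN (s ++ [i])))ᶜ := by
      ext t
      simp only [mem_setOf_eq, mem_inter_iff, mem_iInter, mem_compl_iff, Finset.mem_range]
      constructor
      · intro ht
        have hne : {j' | t ∈ h '' (L ∩ cylN (s ++ [j']))}.Nonempty := by
          by_contra hne
          have : {j' | t ∈ h '' (L ∩ cylN (s ++ [j']))} = ∅ :=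
            not_nonempty_iff_eq_empty.1 hne
          rw [dd, this, Nat.sInf_empty] at ht
          exact hj ht.symm
        have hmem : t ∈ h '' (L ∩ cylN (s ++ [dd h L s t])) := Nat.sInf_mem hne
        rw [ht] at hmem
        refine ⟨hmem, fun i hi hti => ?_⟩
        have hle : dd h L s t ≤ i := Nat.sInf_le hti
        rw [ht] at hle
        omega
      · rintro ⟨h1, h2⟩
        refine Nat.le_antisymm (Nat.sInf_le h1) ?_
        refine Nat.le_of_not_lt fun hlt => ?_
        have hne : {j' | t ∈ h '' (L ∩ cylN (s ++ [j']))}.Nonempty := ⟨j, h1⟩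
        have hmem : t ∈ h '' (L ∩ cylN (s ++ [dd h L s t])) := Nat.sInf_mem hne
        exact h2 _ hlt hmem
    rw [key]
    exact (measQ hh hL _).inter
      (MeasurableSet.biInter (Finset.range j).countable_toSet fun i _ => (measQ hh hL _).compl)

include hh hL in
lemma meas_pre : ∀ n (s : List ℕ), MeasurableSet {t | pre h L n t = s} := by
  intro n
  induction n with
  | zero =>
    intro s
    by_cases hs : s = []
    · have : {t | pre h L 0 t = s} = univ := by ext t; simp [pre, hs]
      rw [this]; exact MeasurableSet.univ
    · have : {t | pre h L 0 t = s} = ∅ := by ext t; simp [pre, Ne.symm hs]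
      rw [this]; exact MeasurableSet.empty
  | succ n ih =>
    intro s
    have key : {t | pre h L (n+1) t = s} =
        ⋃ (s' : List ℕ) (j : ℕ),
          ({t | pre h L n t = s'} ∩ {t | dd h L s' t = j} ∩ {t | s' ++ [j] = s}) := by
      ext t
      simp only [mem_setOf_eq, mem_iUnion, mem_inter_iff]
      constructor
      · intro ht
        exact ⟨pre h L n t, dd h L (pre h L n t) t, ⟨rfl, rfl⟩, ht⟩
      · rintro ⟨s', j, ⟨h1, h2⟩, h3⟩
        simp [pre, h1, h2, h3]
    rw [key]
    refine MeasurableSet.iUnion fun s' => MeasurableSet.iUnion fun j => ?_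
    refine ((ih s').inter (meas_dd hh hL s' j)).inter ?_
    by_cases hc : s' ++ [j] = s
    · have : {t : ℝ | s' ++ [j] = s} = univ := by ext t; simp [hc]
      rw [this]; exact MeasurableSet.univ
    · have : {t : ℝ | s' ++ [j] = s} = ∅ := by ext t; simp [hc]
      rw [this]; exact MeasurableSet.empty

/-- The lexicographically least branch over `t`. -/
noncomputable def sel (h : (ℕ → ℕ) → ℝ) (L : Set (ℕ → ℕ)) (t : ℝ) : ℕ → ℕ :=
  fun n => dd h L (pre h L n t) t

include hh hL in
lemma meas_sel : Measurable (sel h L) := by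
  apply measurable_pi_lambda
  intro n
  apply measurable_to_countable'
  intro j
  have key : (fun t => sel h L t n) ⁻¹' {j} =
      ⋃ (s' : List ℕ), ({t | pre h L n t = s'} ∩ {t | dd h L s' t = j}) := by
    ext t
    simp only [mem_preimage, mem_singleton_iff, mem_iUnion, mem_inter_iff, mem_setOf_eq, sel]
    constructor
    · intro ht; exact ⟨pre h L n t, rfl, ht⟩
    · rintro ⟨s', h1, h2⟩; rw [h1]; exact h2
  rw [key]
  exact MeasurableSet.iUnion fun s' => (meas_pre hh hL n s').inter (meas_dd hh hL s' j)

lemma pre_get (t : ℝ) : ∀ n (i : ℕ), i < n → ∀ hi : i < (pre h L n t).length,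
    (pre h L n t)[i] = sel h L t i := by
  intro n
  induction n with
  | zero => intro i hi; omega
  | succ n ih =>
    intro i hin hi
    rcases lt_or_eq_of_le (Nat.lt_succ_iff.1 hin) with hlt | heq
    · have hlen : i < (pre h L n t).length := by rw [pre_length]; exact hlt
      have e1 : (pre h L (n+1) t)[i]'hi =
          (pre h L n t ++ [dd h L (pre h L n t) t])[i]'(by simpa [pre] using hi) := by
        simp [pre]
      rw [e1, List.getElem_append, dif_pos hlen]
      exact ih i hlt hlen
    · have heq' : i = (pre h L n t).length := by rw [pre_length]; exact heq
      have e1 : (pre h L (n+1) t)[i]'hi =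
          (pre h L n t ++ [dd h L (pre h L n t) t])[i]'(by simpa [pre] using hi) := by
        simp [pre]
      rw [e1, List.getElem_concat_length heq']
      simp only [sel]
      rw [heq]

lemma sel_mem_cylN (t : ℝ) (n : ℕ) : sel h L t ∈ cylN (pre h L n t) := by
  intro i hi
  have hin : i < n := by rwa [pre_length] at hi
  exact (pre_get t n i hin hi).symm

lemma mem_Q_pre {t : ℝ} (ht : t ∈ h '' L) :
    ∀ n, t ∈ h '' (L ∩ cylN (pre h L n t)) := by
  intro n
  induction n with
  | zero => simpa [pre, cylN_nil] using ht
  | succ n ih =>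
    rcases ih with ⟨x, ⟨hxL, hxc⟩, hxt⟩
    have hne : {j | t ∈ h '' (L ∩ cylN (pre h L n t ++ [j]))}.Nonempty :=
      ⟨x (pre h L n t).length, x, ⟨hxL, mem_cylN_concat hxc⟩, hxt⟩
    have hmem : t ∈ h '' (L ∩ cylN (pre h L n t ++ [dd h L (pre h L n t) t])) :=
      Nat.sInf_mem hne
    simpa [pre] using hmem

include hh hL in
lemma sel_spec {t : ℝ} (ht : t ∈ h '' L) : sel h L t ∈ L ∧ h (sel h L t) = t := by
  set C : ℕ → Set (ℕ → ℕ) := fun n => L ∩ cylN (pre h L n t) ∩ h ⁻¹' {t} with hC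
  have hCne : ∀ n, (C n).Nonempty := by
    intro n
    rcases mem_Q_pre (h := h) (L := L) ht n with ⟨x, hx, hxt⟩
    exact ⟨x, hx, hxt⟩
  have hCsub : ∀ n, C (n + 1) ⊆ C n := by
    intro n
    apply inter_subset_inter_left
    apply inter_subset_inter_right
    show cylN (pre h L n t ++ [dd h L (pre h L n t) t]) ⊆ cylN (pre h L n t)
    exact cylN_append_subset _ _
  have hCcl : ∀ n, IsClosed (C n) := fun n =>
    (hL.isClosed.inter (isClosed_cylN _)).inter (IsClosed.preimage hh isClosed_singleton)
  have hCcpt : IsCompact (C 0) :=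
    (hL.inter_right (isClosed_cylN _)).inter_right (IsClosed.preimage hh isClosed_singleton)
  obtain ⟨x, hx⟩ : (⋂ n, C n).Nonempty :=
    IsCompact.nonempty_iInter_of_sequence_nonempty_isCompact_isClosed C hCsub hCne hCcpt hCcl
  have hxn : ∀ n, x ∈ C n := fun n => mem_iInter.1 hx n
  have hxsel : x = sel h L t := by
    funext i
    have hxc : x ∈ cylN (pre h L (i + 1) t) := (hxn (i + 1)).1.2
    have hi : i < (pre h L (i + 1) t).length := by rw [pre_length]; omega
    have := hxc i hi
    rw [this]
    exact pre_get t (i + 1) i (by omega) hi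
  rw [← hxsel]
  exact ⟨(hxn 0).1.1, (hxn 0).2⟩

/-- Measurable selection over a compact subset of Baire space. -/
lemma exists_selection (h : (ℕ → ℕ) → ℝ) (hh : Continuous h) (L : Set (ℕ → ℕ))
    (hL : IsCompact L) :
    ∃ σ : ℝ → (ℕ → ℕ), Measurable σ ∧ ∀ t ∈ h '' L, σ t ∈ L ∧ h (σ t) = t :=
  ⟨sel h L, meas_sel hh hL, fun _ ht => sel_spec hh hL ht⟩

end Sel



/-- Recursive chain of bounding functions. -/
noncomputable def chain (S : ℕ → (ℕ → ℕ) → ℕ) : ℕ → (ℕ → ℕ)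
  | 0 => fun _ => 0
  | n+1 => Function.update (chain S n) n (S n (chain S n))

/-- Finite-level tree set. -/
def Tset (g : ℕ → ℕ) (n : ℕ) : Set (ℕ → ℕ) := {x | ∀ i < n, x i ≤ g i}

lemma Tset_zero (g : ℕ → ℕ) : Tset g 0 = univ := by
  ext x; simp [Tset]

lemma Tset_union (g : ℕ → ℕ) (n : ℕ) :
    Tset g n = ⋃ k, Tset (Function.update g n k) (n+1) := by
  ext x
  simp only [Tset, mem_setOf_eq, mem_iUnion]
  constructor
  · intro hx
    refine ⟨x n, fun i hi => ?_⟩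
    rcases lt_or_eq_of_le (Nat.lt_succ_iff.1 hi) with hlt | heq
    · rw [Function.update_of_ne (by omega)]
      exact hx i hlt
    · subst heq
      rw [Function.update_self]
  · rintro ⟨k, hk⟩ i hi
    have := hk i (by omega)
    rwa [Function.update_of_ne (by omega)] at this

lemma Tset_mono_update (g : ℕ → ℕ) (n : ℕ) :
    Monotone fun k => Tset (Function.update g n k) (n+1) := by
  intro k k' hkk x hx i hi
  have h1 := hx i hi
  by_cases hin : i = n
  · subst hin
    rw [Function.update_self] at h1
    rw [Function.update_self]
    exact le_trans h1 hkk
  · rw [Function.update_of_ne hin] at h1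
    rw [Function.update_of_ne hin]
    exact h1

/-- Choquet-style capacitability: a positive-outer-projection analytic set (as range of a
continuous map from Baire space) contains a compact piece with positive projection. -/
lemma exists_compact_subset (μ : Measure ℝ) [IsFiniteMeasure μ] [μ.OuterRegular]
    (h : (ℕ → ℕ) → ℝ) (hh : Continuous h) (hc : μ (range h) ≠ 0) :
    ∃ L : Set (ℕ → ℕ), IsCompact L ∧ μ (h '' L) ≠ 0 := by
  set c := μ (range h) with hcdef
  have hcfin : c ≠ ⊤ := measure_ne_top μ _
  set d := c / 2 with hd
  have hd0 : d ≠ 0 := by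
    rw [hd]
    intro h0
    rcases ENNReal.div_eq_zero_iff.1 h0 with h1 | h1
    · exact hc h1
    · exact ENNReal.ofNat_ne_top h1
  have hdtop : d ≠ ⊤ := by
    rw [hd]
    exact (ENNReal.div_lt_top hcfin (by norm_num)).ne
  set b : ℕ → ℝ≥0∞ := fun n => d + d * 2⁻¹ ^ n with hb
  have hb0 : b 0 = c := by
    rw [hb]
    simp only [pow_zero, mul_one]
    rw [hd, ENNReal.add_halves]
  have hbanti : ∀ n, b (n+1) < b n := by
    intro n
    rw [hb]
    apply ENNReal.add_lt_add_left hdtop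
    rw [ENNReal.mul_lt_mul_iff_right hd0 hdtop]
    rw [pow_succ]
    calc (2⁻¹ : ℝ≥0∞) ^ n * 2⁻¹ < (2⁻¹ : ℝ≥0∞) ^ n * 1 := by
          rw [ENNReal.mul_lt_mul_iff_right (pow_ne_zero n (by simp)) (by
            exact ENNReal.pow_ne_top (by simp))]
          exact ENNReal.inv_lt_one.2 ENNReal.one_lt_two
      _ = (2⁻¹ : ℝ≥0∞) ^ n := mul_one _
  have hbd : ∀ n, d ≤ b n := fun n => le_self_add
  have step : ∀ n (g : ℕ → ℕ), ∃ k, b (n+1) < μ (h '' Tset g n) →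
      b (n+1) < μ (h '' Tset (Function.update g n k) (n+1)) := by
    intro n g
    by_cases hgood : b (n+1) < μ (h '' Tset g n)
    · have key : μ (h '' Tset g n) = ⨆ k, μ (h '' Tset (Function.update g n k) (n+1)) := by
        rw [Tset_union g n, image_iUnion]
        exact Monotone.measure_iUnion fun k k' hkk =>
          image_mono (Tset_mono_update g n hkk)
      rw [key] at hgood
      rcases lt_iSup_iff.1 hgood with ⟨k, hk⟩
      exact ⟨k, fun _ => hk⟩
    · exact ⟨0, fun hx => absurd hx hgood⟩
  choose S hS using step
  have inv : ∀ n, b n ≤ μ (h '' Tset (chain S n) n) := by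
    intro n
    induction n with
    | zero =>
      rw [Tset_zero, image_univ, hb0]
    | succ n ih =>
      have hstrict : b (n+1) < μ (h '' Tset (chain S n) n) :=
        lt_of_lt_of_le (hbanti n) ih
      have := hS n (chain S n) hstrict
      have hch : chain S (n+1) = Function.update (chain S n) n (S n (chain S n)) := by
        simp [chain]
      rw [hch]
      exact this.le
  set N : ℕ → ℕ := fun n => chain S (n+1) n with hN
  have agree : ∀ n i, i < n → chain S n i = N i := by
    intro n
    induction n with
    | zero => omega
    | succ n ih =>
      intro i hi
      rcases lt_or_eq_of_le (Nat.lt_succ_iff.1 hi) with hlt | heq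
      · have hch : chain S (n+1) = Function.update (chain S n) n (S n (chain S n)) := by
          simp [chain]
        rw [hch, Function.update_of_ne (by omega)]
        exact ih i hlt
      · subst heq
        rfl
  have Teq : ∀ n, Tset (chain S n) n = Tset N n := by
    intro n
    ext x
    simp only [Tset, mem_setOf_eq]
    constructor
    · intro hx i hi
      have := hx i hi
      rwa [agree n i hi] at this
    · intro hx i hi
      rw [agree n i hi]
      exact hx i hi
  set L := {x : ℕ → ℕ | ∀ i, x i ≤ N i} with hLdef
  have hLc : IsCompact L := by
    have : L = Set.pi univ (fun i => Iic (N i)) := by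
      ext x; simp [hLdef, Set.mem_pi, Pi.le_def]
    rw [this]
    exact isCompact_univ_pi fun i => (Set.finite_Iic _).isCompact
  refine ⟨L, hLc, ?_⟩
  have hdle : d ≤ μ (h '' L) := by
    by_contra hlt
    push_neg at hlt
    obtain ⟨O, hOsub, hOopen, hOlt⟩ := Set.exists_isOpen_lt_of_lt (h '' L) d hlt
    have hex : ∃ n, h '' Tset N n ⊆ O := by
      by_contra hnot
      push_neg at hnot
      have hpt : ∀ n, ∃ x, x ∈ Tset N n ∧ h x ∉ O := by
        intro n
        rcases not_subset.1 (hnot n) with ⟨y, hy, hyO⟩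
        rcases hy with ⟨x, hx, rfl⟩
        exact ⟨x, hx, hyO⟩
      choose x hx1 hx2 using hpt
      set y : ℕ → (ℕ → ℕ) := fun n i => min (x n i) (N i) with hy
      have hyL : ∀ n, y n ∈ L := fun n i => min_le_right _ _
      obtain ⟨a, haL, φ, hφ, hconv⟩ := hLc.tendsto_subseq hyL
      have hconv' : Tendsto (fun k => x (φ k)) atTop (nhds a) := by
        rw [tendsto_pi_nhds] at hconv ⊢
        intro i
        refine (hconv i).congr' ?_
        filter_upwards [eventually_ge_atTop (i + 1)] with k hk
        have hφk : i < φ k := lt_of_lt_of_le (Nat.lt_of_lt_of_le (Nat.lt_succ_self i) hk)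
          (hφ.le_apply)
        have : x (φ k) i ≤ N i := hx1 (φ k) i hφk
        simp only [hy, Function.comp_apply]
        exact min_eq_left this
      have h1 : Tendsto (fun k => h (x (φ k))) atTop (nhds (h a)) :=
        (hh.tendsto a).comp hconv'
      have h2 : h a ∈ Oᶜ :=
        hOopen.isClosed_compl.mem_of_tendsto h1
          (Filter.Eventually.of_forall fun k => hx2 (φ k))
      exact h2 (hOsub (mem_image_of_mem h haL))
    rcases hex with ⟨n, hn⟩
    have hle1 : b n ≤ μ O := by
      calc b n ≤ μ (h '' Tset (chain S n) n) := inv n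
        _ = μ (h '' Tset N n) := by rw [Teq]
        _ ≤ μ O := measure_mono hn
    exact absurd (lt_of_le_of_lt hle1 (lt_of_lt_of_le hOlt (hbd n))) (lt_irrefl _)
  intro h0
  rw [h0] at hdle
  exact hd0 (le_antisymm hdle zero_le)

/-- Aumann-type measurable selection on a positive-measure set. -/
lemma core (m : ℕ) (μ : Measure ℝ) [IsFiniteMeasure μ] [μ.OuterRegular]
    (E : Set (ℝ × (Fin m → ℝ))) (hE : MeasurableSet E) (hc : μ (Prod.fst '' E) ≠ 0) :
    ∃ (S : Set ℝ) (v : ℝ → (Fin m → ℝ)), MeasurableSet S ∧ μ S ≠ 0 ∧ Measurable v ∧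
      ∀ t ∈ S, (t, v t) ∈ E := by
  have hE' : AnalyticSet E := hE.analyticSet
  rcases eq_empty_or_nonempty E with rfl | hEne
  · rw [image_empty] at hc
    exact absurd (measure_empty) hc
  rw [analyticSet_iff_exists_polishSpace_range] at hE'
  obtain ⟨β, hβt, hβp, g0, hg0c, hg0r⟩ := hE'
  letI := hβt
  haveI := hβp
  haveI : Nonempty β := by
    rcases hEne with ⟨p, hp⟩
    rw [← hg0r] at hp
    rcases hp with ⟨x, _⟩
    exact ⟨x⟩
  obtain ⟨q, hqc, hqs⟩ := PolishSpace.exists_nat_nat_continuous_surjective β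
  set g : (ℕ → ℕ) → ℝ × (Fin m → ℝ) := g0 ∘ q with hg
  have hgc : Continuous g := hg0c.comp hqc
  have hgr : range g = E := by
    rw [hg, range_comp, hqs.range_eq, image_univ, hg0r]
  set h : (ℕ → ℕ) → ℝ := fun x => (g x).1 with hh
  have hhc : Continuous h := continuous_fst.comp hgc
  have hhr : range h = Prod.fst '' E := by
    rw [← hgr, ← range_comp]
    rfl
  obtain ⟨L, hLc, hLpos⟩ := exists_compact_subset μ h hhc (by rwa [hhr])
  obtain ⟨σ, hσm, hσs⟩ := exists_selection h hhc L hLc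
  refine ⟨h '' L, fun t => (g (σ t)).2, ((hLc.image hhc).isClosed).measurableSet, hLpos,
    measurable_snd.comp (hgc.measurable.comp hσm), ?_⟩
  intro t ht
  obtain ⟨hmem, hfix⟩ := hσs t ht
  have hgE : g (σ t) ∈ E := by
    rw [← hgr]
    exact mem_range_self _
  have hp1 : (g (σ t)).1 = t := hfix
  have : ((g (σ t)).1, (g (σ t)).2) ∈ E := by simpa using hgE
  rwa [hp1] at this


end IntPtwsAux

open IntPtwsAux in
theorem integral_to_pointwise_max (m : ℕ) (T : ℝ) (hT : 0 < T)
    (U : ℝ → Set (Fin m → ℝ))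
    (hU : MeasurableSet {p : ℝ × (Fin m → ℝ) | p.2 ∈ U p.1})
    (f : ℝ → (Fin m → ℝ) → ℝ)
    (hf : Measurable fun p : ℝ × (Fin m → ℝ) => f p.1 p.2)
    (ub : ℝ → (Fin m → ℝ)) (hubm : Measurable ub)
    (hubsel : ∀ᵐ t ∂(volume.restrict (Icc 0 T)), ub t ∈ U t)
    (hubint : IntegrableOn (fun t => f t (ub t)) (Icc 0 T))
    (hmax : ∀ u : ℝ → (Fin m → ℝ), Measurable u →
      (∀ᵐ t ∂(volume.restrict (Icc 0 T)), u t ∈ U t) →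
      IntegrableOn (fun t => f t (u t)) (Icc 0 T) →
      ∫ t in Icc 0 T, f t (u t) ≤ ∫ t in Icc 0 T, f t (ub t)) :
    ∀ᵐ t ∂(volume.restrict (Icc 0 T)), ∀ u ∈ U t, f t u ≤ f t (ub t) := by
  classical
  set μ := volume.restrict (Icc (0:ℝ) T) with hμ
  haveI : IsFiniteMeasure μ := by
    constructor
    rw [hμ, Measure.restrict_apply_univ]
    exact measure_Icc_lt_top
  rw [ae_iff]
  by_contra hpos
  set E : ℕ → Set (ℝ × (Fin m → ℝ)) := fun n =>
    {p | p.2 ∈ U p.1 ∧ f p.1 (ub p.1) < f p.1 p.2 ∧ f p.1 p.2 ≤ n} with hE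
  have hEm : ∀ n, MeasurableSet (E n) := by
    intro n
    have h1 : Measurable fun p : ℝ × (Fin m → ℝ) => f p.1 (ub p.1) :=
      hf.comp (measurable_fst.prodMk (hubm.comp measurable_fst))
    exact hU.inter ((measurableSet_lt h1 hf).inter (measurableSet_le hf measurable_const))
  have hsub : {t | ¬ ∀ u ∈ U t, f t u ≤ f t (ub t)} ⊆ ⋃ n, Prod.fst '' (E n) := by
    intro t ht
    simp only [mem_setOf_eq] at ht
    push_neg at ht
    obtain ⟨u, huU, hufu⟩ := ht
    obtain ⟨n, hn⟩ := exists_nat_ge (f t u)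
    exact mem_iUnion.2 ⟨n, ⟨(t, u), ⟨huU, hufu, hn⟩, rfl⟩⟩
  have hex : ∃ n, μ (Prod.fst '' E n) ≠ 0 := by
    by_contra hall
    push_neg at hall
    exact hpos (measure_mono_null hsub (measure_iUnion_null hall))
  obtain ⟨n, hn⟩ := hex
  obtain ⟨S, v, hSm, hSpos, hvm, hSv⟩ := core m μ (E n) (hEm n) hn
  set u : ℝ → Fin m → ℝ := S.piecewise v ub with hu
  have hum : Measurable u := Measurable.piecewise hSm hvm hubm
  have husel : ∀ᵐ t ∂μ, u t ∈ U t := by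
    filter_upwards [hubsel] with t htub
    by_cases htS : t ∈ S
    · rw [hu, Set.piecewise_eq_of_mem _ _ _ htS]
      exact (hSv t htS).1
    · rw [hu, Set.piecewise_eq_of_notMem _ _ _ htS]
      exact htub
  have hSlt : ∀ t ∈ S, f t (ub t) < f t (u t) := by
    intro t htS
    rw [hu, Set.piecewise_eq_of_mem _ _ _ htS]
    exact (hSv t htS).2.1
  have hbound : ∀ t, |f t (u t)| ≤ |f t (ub t)| + n := by
    intro t
    by_cases htS : t ∈ S
    · have h1 := (hSv t htS).2.1
      have h2 := (hSv t htS).2.2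
      rw [hu, Set.piecewise_eq_of_mem _ _ _ htS]
      rw [abs_le]
      constructor
      · have h3 : -|f t (ub t)| ≤ f t (ub t) := neg_abs_le _
        have h4 : (0:ℝ) ≤ n := Nat.cast_nonneg n
        linarith
      · have h4 : (0:ℝ) ≤ |f t (ub t)| := abs_nonneg _
        linarith
    · rw [hu, Set.piecewise_eq_of_notMem _ _ _ htS]
      exact le_add_of_nonneg_right (Nat.cast_nonneg n)
  have humeas : Measurable fun t => f t (u t) := hf.comp (measurable_id.prodMk hum)
  have hint : IntegrableOn (fun t => f t (u t)) (Icc 0 T) := by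
    apply Integrable.mono' (g := fun t => |f t (ub t)| + n)
    · exact hubint.abs.add (integrableOn_const (C := (n:ℝ)) measure_Icc_lt_top.ne)
    · exact humeas.aestronglyMeasurable
    · exact Filter.Eventually.of_forall hbound
  have hmax' := hmax u hum husel hint
  set φ : ℝ → ℝ := fun t => f t (u t) - f t (ub t) with hφ
  have hφint : IntegrableOn φ (Icc 0 T) := hint.sub hubint
  have hφnn : ∀ t, 0 ≤ φ t := by
    intro t
    by_cases htS : t ∈ S
    · have := hSlt t htS
      rw [hφ]
      simp only
      linarith
    · rw [hφ]
      simp only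
      rw [hu, Set.piecewise_eq_of_notMem _ _ _ htS]
      linarith
  have hφ0 : ∫ t in Icc 0 T, φ t = 0 := by
    have heq : ∫ t in Icc 0 T, φ t = (∫ t in Icc 0 T, f t (u t)) - ∫ t in Icc 0 T, f t (ub t) :=
      integral_sub hint hubint
    have hge : 0 ≤ ∫ t in Icc 0 T, φ t :=
      integral_nonneg hφnn
    linarith [hmax']
  have hφae : φ =ᵐ[μ] 0 := by
    have := (integral_eq_zero_iff_of_nonneg (fun t => hφnn t) hφint).1 hφ0
    exact this
  have hnull : μ {t | φ t ≠ 0} = 0 := by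
    have := ae_iff.1 hφae
    simpa using this
  have hSsub : S ⊆ {t | φ t ≠ 0} := by
    intro t htS
    have h1 := hSlt t htS
    have h2 : φ t = f t (u t) - f t (ub t) := rfl
    simp only [mem_setOf_eq]
    intro h0
    rw [h2] at h0
    linarith
  exact hSpos (measure_mono_null hSsub hnull)
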